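/- arXiv:2005.01408 — 4 statements merged into one kernel-verified Lean document; each statement's English description precedes it below -/
import Mathlib

section
/- For each integer k with 1 ≤ k ≤ 6, the polynomial δ(ζ) = Σ_{j=1}^{k} (1/j)(1-ζ)^j has exactly one zero, namely ζ = 1, on the closed unit disk {ζ ∈ ℂ : |ζ| ≤ 1}. -/
open Finset

/-- The generating polynomial of the k-step BDF method. -/
noncomputable def bdfδ (k : ℕ) (ζ : ℂ) : ℂ :=
  ∑ j ∈ Finset.Icc 1 k, (1 / (j : ℂ)) * (1 - ζ) ^ j

private lemma coeff_bound (a b c d e f b' c' d' e' f' : ℝ) (z : ℂ)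
    (hz : ‖z‖ ≤ 1)
    (h : (a:ℂ) + b*z + c*z^2 + d*z^3 + e*z^4 + f*z^5 = 0)
    (hb : |b| ≤ b') (hc : |c| ≤ c') (hd : |d| ≤ d') (he : |e| ≤ e')
    (hf : |f| ≤ f') (hlt : b' + c' + d' + e' + f' < a) : False := by
  have key : ∀ (x x' : ℝ) (n : ℕ), |x| ≤ x' → ‖(x:ℂ) * z^n‖ ≤ x' := by
    intro x x' n hx
    rw [norm_mul, Complex.norm_real, Real.norm_eq_abs, norm_pow]
    calc |x| * ‖z‖ ^ n ≤ x' * 1 := by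
          apply mul_le_mul hx (pow_le_one₀ (norm_nonneg z) hz)
            (pow_nonneg (norm_nonneg z) n) ((abs_nonneg x).trans hx)
      _ = x' := mul_one x'
  have ha : (a:ℂ) = -(↑b*z + ↑c*z^2 + ↑d*z^3 + ↑e*z^4 + ↑f*z^5) := by
    linear_combination h
  have h2 : a ≤ ‖(b:ℂ)*z + ↑c*z^2 + ↑d*z^3 + ↑e*z^4 + ↑f*z^5‖ := by
    calc a ≤ |a| := le_abs_self a
      _ = ‖(a:ℂ)‖ := by rw [Complex.norm_real, Real.norm_eq_abs]
      _ = _ := by rw [ha, norm_neg]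
  have h3 : ‖(b:ℂ)*z + ↑c*z^2 + ↑d*z^3 + ↑e*z^4 + ↑f*z^5‖
      ≤ b' + c' + d' + e' + f' := by
    calc ‖(b:ℂ)*z + ↑c*z^2 + ↑d*z^3 + ↑e*z^4 + ↑f*z^5‖
        ≤ ‖(b:ℂ)*z + ↑c*z^2 + ↑d*z^3 + ↑e*z^4‖ + ‖(f:ℂ)*z^5‖ :=
          norm_add_le _ _
      _ ≤ (‖(b:ℂ)*z + ↑c*z^2 + ↑d*z^3‖ + ‖(e:ℂ)*z^4‖) + _ := by
          gcongr; exact norm_add_le _ _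
      _ ≤ ((‖(b:ℂ)*z + ↑c*z^2‖ + ‖(d:ℂ)*z^3‖) + _) + _ := by
          gcongr; exact norm_add_le _ _
      _ ≤ (((‖(b:ℂ)*z‖ + ‖(c:ℂ)*z^2‖) + _) + _) + _ := by
          gcongr; exact norm_add_le _ _
      _ ≤ (((b' + c') + d') + e') + f' := by
          gcongr <;> [exact (by simpa using key b b' 1 hb); exact key c c' 2 hc;
            exact key d d' 3 hd; exact key e e' 4 he; exact key f f' 5 hf]
      _ = b' + c' + d' + e' + f' := by ring
  linarith

/-- For `1 ≤ k ≤ 6`, the BDF polynomial `δ` has exactly one zero on the closed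
unit disk, namely `ζ = 1`. -/
theorem stmt_0 (k : ℕ) (hk1 : 1 ≤ k) (hk6 : k ≤ 6) (ζ : ℂ)
    (hζ : ‖ζ‖ ≤ 1) :
    bdfδ k ζ = 0 ↔ ζ = 1 := by
  constructor
  · intro h
    interval_cases k
    · -- k = 1
      have hexp : bdfδ 1 ζ = (1 - ζ) * (1) := by
        unfold bdfδ
        rw [show Finset.Icc 1 1 = {1} from rfl]
        simp [Finset.sum_insert]
      rw [hexp] at h
      rcases mul_eq_zero.mp h with h' | h'
      · exact (sub_eq_zero.mp h').symm
      · exact absurd h' one_ne_zero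
    · -- k = 2
      have hexp : bdfδ 2 ζ = (1 - ζ) * (3/2 - 1/2 * ζ ^ 1) := by
        unfold bdfδ
        rw [show Finset.Icc 1 2 = {1,2} from rfl]
        simp [Finset.sum_insert]
        ring
      rw [hexp] at h
      rcases mul_eq_zero.mp h with h' | h'
      · exact (sub_eq_zero.mp h').symm
      · exfalso
        exact coeff_bound (3/2) (-(1/2)) 0 0 0 0 (1/2) (0) (0) (0) (0) ζ
          hζ
          (by push_cast; linear_combination h')
          (abs_le.mpr (by norm_num))
          (abs_le.mpr (by norm_num))
          (abs_le.mpr (by norm_num))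
          (abs_le.mpr (by norm_num))
          (abs_le.mpr (by norm_num))
          (by norm_num)
    · -- k = 3
      have hexp : bdfδ 3 ζ = (1 - ζ) * (11/6 - 7/6 * ζ ^ 1 + 1/3 * ζ ^ 2) := by
        unfold bdfδ
        rw [show Finset.Icc 1 3 = {1,2,3} from rfl]
        simp [Finset.sum_insert]
        ring
      rw [hexp] at h
      rcases mul_eq_zero.mp h with h' | h'
      · exact (sub_eq_zero.mp h').symm
      · exfalso
        exact coeff_bound (11/6) (-(7/6)) (1/3) 0 0 0 (7/6) (1/3) (0) (0) (0) ζ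
          hζ
          (by push_cast; linear_combination h')
          (abs_le.mpr (by norm_num))
          (abs_le.mpr (by norm_num))
          (abs_le.mpr (by norm_num))
          (abs_le.mpr (by norm_num))
          (abs_le.mpr (by norm_num))
          (by norm_num)
    · -- k = 4
      have hexp : bdfδ 4 ζ = (1 - ζ) * (25/12 - 23/12 * ζ ^ 1 + 13/12 * ζ ^ 2 - 1/4 * ζ ^ 3) := by
        unfold bdfδ
        rw [show Finset.Icc 1 4 = {1,2,3,4} from rfl]
        simp [Finset.sum_insert]
        ring
      rw [hexp] at h
      rcases mul_eq_zero.mp h with h' | h'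
      · exact (sub_eq_zero.mp h').symm
      · exfalso
        have g1 : (625/144 + 121/144 * ζ ^ 2 + 31/144 * ζ ^ 4 - 1/16 * ζ ^ 6 : ℂ) = 0 := by
          linear_combination (25/12 + 23/12 * ζ ^ 1 + 13/12 * ζ ^ 2 + 1/4 * ζ ^ 3 : ℂ) * h'
        exact coeff_bound (625/144) (121/144) (31/144) (-(1/16)) 0 0 (121/144) (31/144) (1/16) (0) (0) (ζ ^ 2)
          (by rw [norm_pow]; exact pow_le_one₀ (norm_nonneg ζ) hζ)
          (by push_cast; linear_combination g1)
          (abs_le.mpr (by norm_num))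
          (abs_le.mpr (by norm_num))
          (abs_le.mpr (by norm_num))
          (abs_le.mpr (by norm_num))
          (abs_le.mpr (by norm_num))
          (by norm_num)
    · -- k = 5
      have hexp : bdfδ 5 ζ = (1 - ζ) * (137/60 - 163/60 * ζ ^ 1 + 137/60 * ζ ^ 2 - 21/20 * ζ ^ 3 + 1/5 * ζ ^ 4) := by
        unfold bdfδ
        rw [show Finset.Icc 1 5 = {1,2,3,4,5} from rfl]
        simp [Finset.sum_insert]
        ring
      rw [hexp] at h
      rcases mul_eq_zero.mp h with h' | h'
      · exact (sub_eq_zero.mp h').symm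
      · exfalso
        have g1 : (18769/3600 + 10969/3600 * ζ ^ 2 + 1519/3600 * ζ ^ 4 - 227/1200 * ζ ^ 6 + 1/25 * ζ ^ 8 : ℂ) = 0 := by
          linear_combination (137/60 + 163/60 * ζ ^ 1 + 137/60 * ζ ^ 2 + 21/20 * ζ ^ 3 + 1/5 * ζ ^ 4 : ℂ) * h'
        exact coeff_bound (18769/3600) (10969/3600) (1519/3600) (-(227/1200)) (1/25) 0 (10969/3600) (1519/3600) (227/1200) (1/25) (0) (ζ ^ 2)
          (by rw [norm_pow]; exact pow_le_one₀ (norm_nonneg ζ) hζ)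
          (by push_cast; linear_combination g1)
          (abs_le.mpr (by norm_num))
          (abs_le.mpr (by norm_num))
          (abs_le.mpr (by norm_num))
          (abs_le.mpr (by norm_num))
          (abs_le.mpr (by norm_num))
          (by norm_num)
    · -- k = 6
      have hexp : bdfδ 6 ζ = (1 - ζ) * (49/20 - 71/20 * ζ ^ 1 + 79/20 * ζ ^ 2 - 163/60 * ζ ^ 3 + 31/30 * ζ ^ 4 - 1/6 * ζ ^ 5) := by
        unfold bdfδ
        rw [show Finset.Icc 1 6 = {1,2,3,4,5,6} from rfl]
        simp [Finset.sum_insert]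
        ring
      rw [hexp] at h
      rcases mul_eq_zero.mp h with h' | h'
      · exact (sub_eq_zero.mp h').symm
      · exfalso
        have g1 : (2401/400 + 2701/400 * ζ ^ 2 + 551/400 * ζ ^ 4 - 1441/3600 * ζ ^ 6 + 73/450 * ζ ^ 8 - 1/36 * ζ ^ 10 : ℂ) = 0 := by
          linear_combination (49/20 + 71/20 * ζ ^ 1 + 79/20 * ζ ^ 2 + 163/60 * ζ ^ 3 + 31/30 * ζ ^ 4 + 1/6 * ζ ^ 5 : ℂ) * h'
        have g2 : (5764801/160000 - 4649499/160000 * ζ ^ 4 + 4440353/480000 * ζ ^ 8 + 8577431/12960000 * ζ ^ 12 + 6607/1620000 * ζ ^ 16 - 1/1296 * ζ ^ 20 : ℂ) = 0 := by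
          linear_combination (2401/400 - 2701/400 * ζ ^ 2 + 551/400 * ζ ^ 4 + 1441/3600 * ζ ^ 6 + 73/450 * ζ ^ 8 + 1/36 * ζ ^ 10 : ℂ) * g1
        have g3 : (33232930569601/25600000000 - 13658020023497/76800000000 * ζ ^ 8 + 257821535238931/2073600000000 * ζ ^ 16 - 68430748838689/167961600000000 * ζ ^ 24 + 5448199273/5248800000000 * ζ ^ 32 - 1/1679616 * ζ ^ 40 : ℂ) = 0 := by
          linear_combination (5764801/160000 + 4649499/160000 * ζ ^ 4 + 4440353/480000 * ζ ^ 8 - 8577431/12960000 * ζ ^ 12 + 6607/1620000 * ζ ^ 16 + 1/1296 * ζ ^ 20 : ℂ) * g2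
        exact coeff_bound (33232930569601/25600000000) (-(13658020023497/76800000000)) (257821535238931/2073600000000) (-(68430748838689/167961600000000)) (5448199273/5248800000000) (-(1/1679616)) (13658020023497/76800000000) (257821535238931/2073600000000) (68430748838689/167961600000000) (5448199273/5248800000000) (1/1679616) (ζ ^ 8)
          (by rw [norm_pow]; exact pow_le_one₀ (norm_nonneg ζ) hζ)
          (by push_cast; linear_combination g3)
          (abs_le.mpr (by norm_num))
          (abs_le.mpr (by norm_num))
          (abs_le.mpr (by norm_num))
          (abs_le.mpr (by norm_num))
          (abs_le.mpr (by norm_num))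
          (by norm_num)
  · rintro rfl
    unfold bdfδ
    apply Finset.sum_eq_zero
    intro j hj
    rw [Finset.mem_Icc] at hj
    have hj0 : j ≠ 0 := by omega
    simp [sub_self, zero_pow hj0]
end

section
/- For each integer k with 1 ≤ k ≤ 6, the functions M₁(ζ) = (1-ζ)/δ(ζ) and M₂(ζ) = δ(ζ)/(1-ζ) are bounded above and below in modulus by positive constants on the punctured unit circle {ζ ∈ ℂ : |ζ| = 1, ζ ≠ 1}. -/
noncomputable def bdfg (k : ℕ) (z : ℂ) : ℂ :=
  ∑ j ∈ Finset.Icc 1 k, (1 / (j : ℂ)) * (1 - z) ^ (j - 1)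

lemma bdf_factor (k : ℕ) (z : ℂ) : bdfδ k z = (1 - z) * bdfg k z := by
  unfold bdfδ bdfg
  rw [Finset.mul_sum]
  refine Finset.sum_congr rfl fun j hj => ?_
  have hj1 : 1 ≤ j := (Finset.mem_Icc.mp hj).1
  have h : (1 - z) ^ j = (1 - z) * (1 - z) ^ (j - 1) := by
    obtain ⟨m, rfl⟩ := Nat.exists_eq_add_of_le hj1
    rw [pow_add, pow_one, Nat.add_sub_cancel_left]
  rw [h]; ring

lemma gconj (k : ℕ) (z : ℂ) : (starRingEnd ℂ) (bdfg k z) = bdfg k ((starRingEnd ℂ) z) := by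
  unfold bdfg
  simp

lemma gexp1 (z : ℂ) : bdfg 1 z = 1 := by
  unfold bdfg
  rw [show Finset.Icc 1 1 = {1} from rfl]
  norm_num [Finset.sum_insert, Finset.mem_insert]
  try ring

lemma gbound1 (ζ : ℂ) (h : Complex.normSq ζ = 1) :
    1/4 ≤ Complex.normSq (bdfg 1 ζ) ∧ Complex.normSq (bdfg 1 ζ) ≤ 196 := by
  set a : ℝ := ζ.re with ha
  have h1 : ζ * (starRingEnd ℂ) ζ = 1 := by rw [Complex.mul_conj, h]; norm_num
  have h2 : ζ + (starRingEnd ℂ) ζ = 2 * (a : ℂ) := by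
    rw [Complex.add_conj]; push_cast; ring
  have hz : ζ * (2 * (a : ℂ) - ζ) = 1 := by linear_combination h1 - ζ * h2
  have hcz : (starRingEnd ℂ) ζ = 2 * (a : ℂ) - ζ := by linear_combination h2
  have key : (Complex.normSq (bdfg 1 ζ) : ℂ) = (((1) : ℝ) : ℂ) := by
    rw [← Complex.mul_conj, gconj, hcz, gexp1, gexp1]
    push_cast
    linear_combination (0) * hz
  have keyR : Complex.normSq (bdfg 1 ζ) = ((1) : ℝ) := by exact_mod_cast key
  have ha2 : a^2 ≤ 1 := by
    have hns := Complex.normSq_apply ζ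
    nlinarith [sq_nonneg ζ.im]
  rw [keyR]
  constructor <;> nlinarith [sq_nonneg a]


lemma gexp2 (z : ℂ) : bdfg 2 z = 1 + (1/2) * (1-z)^1 := by
  unfold bdfg
  rw [show Finset.Icc 1 2 = {1, 2} from rfl]
  norm_num [Finset.sum_insert, Finset.mem_insert]
  try ring

lemma gbound2 (ζ : ℂ) (h : Complex.normSq ζ = 1) :
    1/4 ≤ Complex.normSq (bdfg 2 ζ) ∧ Complex.normSq (bdfg 2 ζ) ≤ 196 := by
  set a : ℝ := ζ.re with ha
  have h1 : ζ * (starRingEnd ℂ) ζ = 1 := by rw [Complex.mul_conj, h]; norm_num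
  have h2 : ζ + (starRingEnd ℂ) ζ = 2 * (a : ℂ) := by
    rw [Complex.add_conj]; push_cast; ring
  have hz : ζ * (2 * (a : ℂ) - ζ) = 1 := by linear_combination h1 - ζ * h2
  have hcz : (starRingEnd ℂ) ζ = 2 * (a : ℂ) - ζ := by linear_combination h2
  have key : (Complex.normSq (bdfg 2 ζ) : ℂ) = (((5/2) + (-3/2)*a : ℝ) : ℂ) := by
    rw [← Complex.mul_conj, gconj, hcz, gexp2, gexp2]
    push_cast
    linear_combination ((1/4)) * hz
  have keyR : Complex.normSq (bdfg 2 ζ) = ((5/2) + (-3/2)*a : ℝ) := by exact_mod_cast key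
  have ha2 : a^2 ≤ 1 := by
    have hns := Complex.normSq_apply ζ
    nlinarith [sq_nonneg ζ.im]
  rw [keyR]
  constructor <;> nlinarith [sq_nonneg a]


lemma gexp3 (z : ℂ) : bdfg 3 z = 1 + (1/2) * (1-z)^1 + (1/3) * (1-z)^2 := by
  unfold bdfg
  rw [show Finset.Icc 1 3 = {1, 2, 3} from rfl]
  norm_num [Finset.sum_insert, Finset.mem_insert]
  try ring

lemma gbound3 (ζ : ℂ) (h : Complex.normSq ζ = 1) :
    1/4 ≤ Complex.normSq (bdfg 3 ζ) ∧ Complex.normSq (bdfg 3 ζ) ≤ 196 := by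
  set a : ℝ := ζ.re with ha
  have h1 : ζ * (starRingEnd ℂ) ζ = 1 := by rw [Complex.mul_conj, h]; norm_num
  have h2 : ζ + (starRingEnd ℂ) ζ = 2 * (a : ℂ) := by
    rw [Complex.add_conj]; push_cast; ring
  have hz : ζ * (2 * (a : ℂ) - ζ) = 1 := by linear_combination h1 - ζ * h2
  have hcz : (starRingEnd ℂ) ζ = 2 * (a : ℂ) - ζ := by linear_combination h2
  have key : (Complex.normSq (bdfg 3 ζ) : ℂ) = (((65/18) + (-91/18)*a + (22/9)*a^2 : ℝ) : ℂ) := by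
    rw [← Complex.mul_conj, gconj, hcz, gexp3, gexp3]
    push_cast
    linear_combination ((1/4) + (-7/9)*(a:ℂ) + (2/9)*ζ*(a:ℂ) + (-1/9)*ζ^2) * hz
  have keyR : Complex.normSq (bdfg 3 ζ) = ((65/18) + (-91/18)*a + (22/9)*a^2 : ℝ) := by exact_mod_cast key
  have ha2 : a^2 ≤ 1 := by
    have hns := Complex.normSq_apply ζ
    nlinarith [sq_nonneg ζ.im]
  rw [keyR]
  constructor <;> nlinarith [sq_nonneg a, sq_nonneg (a-1), sq_nonneg (a+1)]


lemma gexp4 (z : ℂ) : bdfg 4 z = 1 + (1/2) * (1-z)^1 + (1/3) * (1-z)^2 + (1/4) * (1-z)^3 := by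
  unfold bdfg
  rw [show Finset.Icc 1 4 = {1, 2, 3, 4} from rfl]
  norm_num [Finset.sum_insert, Finset.mem_insert]
  try ring

lemma gbound4 (ζ : ℂ) (h : Complex.normSq ζ = 1) :
    1/4 ≤ Complex.normSq (bdfg 4 ζ) ∧ Complex.normSq (bdfg 4 ζ) ≤ 196 := by
  set a : ℝ := ζ.re with ha
  have h1 : ζ * (starRingEnd ℂ) ζ = 1 := by rw [Complex.mul_conj, h]; norm_num
  have h2 : ζ + (starRingEnd ℂ) ζ = 2 * (a : ℂ) := by
    rw [Complex.add_conj]; push_cast; ring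
  have hz : ζ * (2 * (a : ℂ) - ζ) = 1 := by linear_combination h1 - ζ * h2
  have hcz : (starRingEnd ℂ) ζ = 2 * (a : ℂ) - ζ := by linear_combination h2
  have key : (Complex.normSq (bdfg 4 ζ) : ℂ) = (((34/9) + (-86/9)*a + (197/18)*a^2 + (-25/6)*a^3 : ℝ) : ℂ) := by
    rw [← Complex.mul_conj, gconj, hcz, gexp4, gexp4]
    push_cast
    linear_combination ((-9/16) + (-113/72)*(a:ℂ) + (23/12)*(a:ℂ)^2 + (5/9)*ζ*(a:ℂ) + (-13/12)*ζ*(a:ℂ)^2 + (-5/18)*ζ^2 + (13/24)*ζ^2*(a:ℂ) + (1/4)*ζ^2*(a:ℂ)^2 + (-1/4)*ζ^3*(a:ℂ) + (1/16)*ζ^4) * hz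
  have keyR : Complex.normSq (bdfg 4 ζ) = ((34/9) + (-86/9)*a + (197/18)*a^2 + (-25/6)*a^3 : ℝ) := by exact_mod_cast key
  have ha2 : a^2 ≤ 1 := by
    have hns := Complex.normSq_apply ζ
    nlinarith [sq_nonneg ζ.im]
  rw [keyR]
  constructor <;> nlinarith [sq_nonneg a, sq_nonneg (a-1), sq_nonneg (a+1), sq_nonneg (a*a-1)]


lemma gexp5 (z : ℂ) : bdfg 5 z = 1 + (1/2) * (1-z)^1 + (1/3) * (1-z)^2 + (1/4) * (1-z)^3 + (1/5) * (1-z)^4 := by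
  unfold bdfg
  rw [show Finset.Icc 1 5 = {1, 2, 3, 4, 5} from rfl]
  norm_num [Finset.sum_insert, Finset.mem_insert]
  try ring

lemma gbound5 (ζ : ℂ) (h : Complex.normSq ζ = 1) :
    1/4 ≤ Complex.normSq (bdfg 5 ζ) ∧ Complex.normSq (bdfg 5 ζ) ≤ 196 := by
  set a : ℝ := ζ.re with ha
  have h1 : ζ * (starRingEnd ℂ) ζ = 1 := by rw [Complex.mul_conj, h]; norm_num
  have h2 : ζ + (starRingEnd ℂ) ζ = 2 * (a : ℂ) := by
    rw [Complex.add_conj]; push_cast; ring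
  have hz : ζ * (2 * (a : ℂ) - ζ) = 1 := by linear_combination h1 - ζ * h2
  have hcz : (starRingEnd ℂ) ζ = 2 * (a : ℂ) - ζ := by linear_combination h2
  have key : (Complex.normSq (bdfg 5 ζ) : ℂ) = (((634/225) + (-2786/225)*a + (12053/450)*a^2 + (-3529/150)*a^3 + (548/75)*a^4 : ℝ) : ℂ) := by
    rw [← Complex.mul_conj, gconj, hcz, gexp5, gexp5]
    push_cast
    linear_combination ((-115/48) + (43/1800)*(a:ℂ) + (593/100)*(a:ℂ)^2 + (-326/75)*(a:ℂ)^3 + (293/225)*ζ*(a:ℂ) + (-391/100)*ζ*(a:ℂ)^2 + (274/75)*ζ*(a:ℂ)^3 + (-293/450)*ζ^2 + (391/200)*ζ^2*(a:ℂ) + (-91/100)*ζ^2*(a:ℂ)^2 + (-42/25)*ζ^2*(a:ℂ)^3 + (-11/12)*ζ^3*(a:ℂ) + (42/25)*ζ^3*(a:ℂ)^2 + (8/25)*ζ^3*(a:ℂ)^3 + (11/48)*ζ^4 + (-21/50)*ζ^4*(a:ℂ) + (-12/25)*ζ^4*(a:ℂ)^2 + (6/25)*ζ^5*(a:ℂ)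 + (-1/25)*ζ^6) * hz
  have keyR : Complex.normSq (bdfg 5 ζ) = ((634/225) + (-2786/225)*a + (12053/450)*a^2 + (-3529/150)*a^3 + (548/75)*a^4 : ℝ) := by exact_mod_cast key
  have ha2 : a^2 ≤ 1 := by
    have hns := Complex.normSq_apply ζ
    nlinarith [sq_nonneg ζ.im]
  rw [keyR]
  constructor <;> nlinarith [sq_nonneg a, sq_nonneg (a-1), sq_nonneg (a+1), sq_nonneg (a*a-1), sq_nonneg (a - 7/16), sq_nonneg (a*(a-7/16))]


lemma gexp6 (z : ℂ) : bdfg 6 z = 1 + (1/2) * (1-z)^1 + (1/3) * (1-z)^2 + (1/4) * (1-z)^3 + (1/5) * (1-z)^4 + (1/6) * (1-z)^5 := by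
  unfold bdfg
  rw [show Finset.Icc 1 6 = {1, 2, 3, 4, 5, 6} from rfl]
  norm_num [Finset.sum_insert, Finset.mem_insert]
  try ring

lemma gbound6 (ζ : ℂ) (h : Complex.normSq ζ = 1) :
    1/4 ≤ Complex.normSq (bdfg 6 ζ) ∧ Complex.normSq (bdfg 6 ζ) ≤ 196 := by
  set a : ℝ := ζ.re with ha
  have h1 : ζ * (starRingEnd ℂ) ζ = 1 := by rw [Complex.mul_conj, h]; norm_num
  have h2 : ζ + (starRingEnd ℂ) ζ = 2 * (a : ℂ) := by
    rw [Complex.add_conj]; push_cast; ring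
  have hz : ζ * (2 * (a : ℂ) - ζ) = 1 := by linear_combination h1 - ζ * h2
  have hcz : (starRingEnd ℂ) ζ = 2 * (a : ℂ) - ζ := by linear_combination h2
  have key : (Complex.normSq (bdfg 6 ζ) : ℂ) = (((274/225) + (-2486/225)*a + (20453/450)*a^2 + (-10729/150)*a^3 + (3748/75)*a^4 + (-196/15)*a^5 : ℝ) : ℂ) := by
    rw [← Complex.mul_conj, gconj, hcz, gexp6, gexp6]
    push_cast
    linear_combination ((-689/144) + (11423/1800)*(a:ℂ) + (6067/900)*(a:ℂ)^2 + (-457/25)*(a:ℂ)^3 + (142/15)*(a:ℂ)^4 + (1771/450)*ζ*(a:ℂ) + (-9979/900)*ζ*(a:ℂ)^2 + (3902/225)*ζ*(a:ℂ)^3 + (-158/15)*ζ*(a:ℂ)^4 + (-1771/900)*ζ^2 + (9979/1800)*ζ^2*(a:ℂ) + (-631/100)*ζ^2*(a:ℂ)^2 + (-623/225)*ζ^2*(a:ℂ)^3 + (326/45)*ζ^2*(a:ℂ)^4 + (-85/36)*ζ^3*(a:ℂ) + (1808/225)*ζ^3*(a:ℂ)^2 + (-1288/225)*ζ^3*(a:ℂ)^3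 + (-124/45)*ζ^3*(a:ℂ)^4 + (85/144)*ζ^4 + (-452/225)*ζ^4*(a:ℂ) + (-211/450)*ζ^4*(a:ℂ)^2 + (62/15)*ζ^4*(a:ℂ)^3 + (4/9)*ζ^4*(a:ℂ)^4 + (57/50)*ζ^5*(a:ℂ) + (-31/15)*ζ^5*(a:ℂ)^2 + (-8/9)*ζ^5*(a:ℂ)^3 + (-19/100)*ζ^6 + (31/90)*ζ^6*(a:ℂ) + (2/3)*ζ^6*(a:ℂ)^2 + (-2/9)*ζ^7*(a:ℂ) + (1/36)*ζ^8) * hz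
  have keyR : Complex.normSq (bdfg 6 ζ) = ((274/225) + (-2486/225)*a + (20453/450)*a^2 + (-10729/150)*a^3 + (3748/75)*a^4 + (-196/15)*a^5 : ℝ) := by exact_mod_cast key
  have ha2 : a^2 ≤ 1 := by
    have hns := Complex.normSq_apply ζ
    nlinarith [sq_nonneg ζ.im]
  rw [keyR]
  constructor <;> nlinarith [sq_nonneg a, sq_nonneg (a-1), sq_nonneg (a+1), sq_nonneg (a*a-1), sq_nonneg (a - 1/5), sq_nonneg (a*(a-1/5)), sq_nonneg ((a-1)*(a-1/5)), sq_nonneg ((a+1)*(a-1/5))]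

lemma gbound (k : ℕ) (hk1 : 1 ≤ k) (hk6 : k ≤ 6) (ζ : ℂ) (h : Complex.normSq ζ = 1) :
    1/4 ≤ Complex.normSq (bdfg k ζ) ∧ Complex.normSq (bdfg k ζ) ≤ 196 := by
  interval_cases k
  · exact gbound1 ζ h
  · exact gbound2 ζ h
  · exact gbound3 ζ h
  · exact gbound4 ζ h
  · exact gbound5 ζ h
  · exact gbound6 ζ h

/-- For `1 ≤ k ≤ 6`, the multipliers `M₁(ζ) = (1-ζ)/δ(ζ)` and
`M₂(ζ) = δ(ζ)/(1-ζ)` are bounded above and below in modulus by positive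
constants on the punctured unit circle `{|ζ| = 1, ζ ≠ 1}`. -/
theorem stmt_1 (k : ℕ) (hk1 : 1 ≤ k) (hk6 : k ≤ 6) :
    ∃ c C : ℝ, 0 < c ∧ 0 < C ∧
      ∀ ζ : ℂ, ‖ζ‖ = 1 → ζ ≠ 1 →
        (c ≤ ‖(1 - ζ) / bdfδ k ζ‖ ∧
          ‖(1 - ζ) / bdfδ k ζ‖ ≤ C) ∧
        (c ≤ ‖bdfδ k ζ / (1 - ζ)‖ ∧
          ‖bdfδ k ζ / (1 - ζ)‖ ≤ C) := by
  refine ⟨1/14, 14, by norm_num, by norm_num, fun ζ hζ hζ1 => ?_⟩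
  have hns : Complex.normSq ζ = 1 := by
    rw [← Complex.sq_norm, hζ]; norm_num
  obtain ⟨hl, hu⟩ := gbound k hk1 hk6 ζ hns
  have h1z : (1 : ℂ) - ζ ≠ 0 := sub_ne_zero.mpr (Ne.symm hζ1)
  have habs2 : ‖bdfg k ζ‖ ^ 2 = Complex.normSq (bdfg k ζ) := Complex.sq_norm _
  have hnn : 0 ≤ ‖bdfg k ζ‖ := norm_nonneg _
  have hga : 1/2 ≤ ‖bdfg k ζ‖ := by nlinarith
  have hgb : ‖bdfg k ζ‖ ≤ 14 := by nlinarith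
  have hgpos : 0 < ‖bdfg k ζ‖ := by linarith
  have hM2 : ‖bdfδ k ζ / (1 - ζ)‖ = ‖bdfg k ζ‖ := by
    rw [bdf_factor, mul_comm, mul_div_assoc, div_self h1z, mul_one]
  have hM1 : ‖(1 - ζ) / bdfδ k ζ‖ = (‖bdfg k ζ‖)⁻¹ := by
    rw [bdf_factor, div_mul_cancel_left₀ h1z, norm_inv]
  have hinv : ‖bdfg k ζ‖ * (‖bdfg k ζ‖)⁻¹ = 1 :=
    mul_inv_cancel₀ (ne_of_gt hgpos)
  have hinvnn : 0 ≤ (‖bdfg k ζ‖)⁻¹ := inv_nonneg.mpr hnn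
  rw [hM1, hM2]
  refine ⟨⟨?_, ?_⟩, ?_, ?_⟩
  · nlinarith
  · nlinarith
  · linarith
  · linarith
end

section
/- Let λ₀ > 0 and C > 0. There exists a constant C' > 0, independent of the time step τ > 0 and of N, such that for all n with 1 ≤ n ≤ N, τ · Σ_{j=1}^{n} e^{-λ₀ (n+1-j)τ} / ((n+1-j)τ) ≤ C' · log(1 + n). -/
open Finset

lemma sum_reflect_inv (n : ℕ) :
    ∑ j ∈ Finset.Icc 1 n, (1 : ℝ) / ((n : ℝ) + 1 - j) = (harmonic n : ℝ) := by
  rw [harmonic_eq_sum_Icc]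
  push_cast
  rw [Finset.sum_bij' (fun j _ => n + 1 - j) (fun j _ => n + 1 - j)]
  · intro a ha; simp only [Finset.mem_Icc] at ha ⊢; omega
  · intro a ha; simp only [Finset.mem_Icc] at ha ⊢; omega
  · intro a ha; simp only [Finset.mem_Icc] at ha; omega
  · intro a ha; simp only [Finset.mem_Icc] at ha; omega
  · intro a ha
    simp only [Finset.mem_Icc] at ha
    have : ((n + 1 - a : ℕ) : ℝ) = (n : ℝ) + 1 - a := by
      have : a ≤ n + 1 := by omega
      push_cast [Nat.cast_sub this]; ring
    rw [this, one_div]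

/-- Logarithmic bound for the discrete convolution sum
`τ ∑_{j=1}^n e^{-λ₀(n+1-j)τ}/((n+1-j)τ) ≤ C' log(1+n)`,
uniformly in the step size `τ > 0` and in `N`. -/
theorem stmt_4 (lam : ℝ) (hlam : 0 < lam) (C : ℝ) (hC : 0 < C) :
    ∃ C' : ℝ, 0 < C' ∧ ∀ τ : ℝ, 0 < τ → ∀ N n : ℕ, 1 ≤ n → n ≤ N →
      τ * ∑ j ∈ Finset.Icc 1 n,
        Real.exp (-lam * (((n : ℝ) + 1 - j) * τ)) / (((n : ℝ) + 1 - j) * τ)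
        ≤ C' * Real.log (1 + n) := by
  have hlog2 : 0 < Real.log 2 := Real.log_pos (by norm_num)
  refine ⟨1 + 1 / Real.log 2, by positivity, ?_⟩
  intro τ hτ N n hn _
  have hpos : ∀ j ∈ Finset.Icc 1 n, (0 : ℝ) < (n : ℝ) + 1 - j := by
    intro j hj
    simp only [Finset.mem_Icc] at hj
    have : (j : ℝ) ≤ n := by exact_mod_cast hj.2
    linarith
  have step1 : τ * ∑ j ∈ Finset.Icc 1 n,
      Real.exp (-lam * (((n : ℝ) + 1 - j) * τ)) / (((n : ℝ) + 1 - j) * τ)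
      ≤ ∑ j ∈ Finset.Icc 1 n, (1 : ℝ) / ((n : ℝ) + 1 - j) := by
    rw [Finset.mul_sum]
    refine Finset.sum_le_sum fun j hj => ?_
    have hj' := hpos j hj
    have hkt : (0 : ℝ) < ((n : ℝ) + 1 - j) * τ := by positivity
    have hexp : Real.exp (-lam * (((n : ℝ) + 1 - j) * τ)) ≤ 1 := by
      rw [Real.exp_le_one_iff]; nlinarith
    calc τ * (Real.exp (-lam * (((n : ℝ) + 1 - j) * τ)) / (((n : ℝ) + 1 - j) * τ))
        ≤ τ * (1 / (((n : ℝ) + 1 - j) * τ)) := by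
          apply mul_le_mul_of_nonneg_left _ hτ.le
          exact div_le_div_of_nonneg_right hexp hkt.le
      _ = 1 / ((n : ℝ) + 1 - j) := by field_simp
  have step2 : (harmonic n : ℝ) ≤ (1 + 1 / Real.log 2) * Real.log (1 + n) := by
    have h1 : (harmonic n : ℝ) ≤ 1 + Real.log n := harmonic_le_one_add_log n
    have h2 : Real.log n ≤ Real.log (1 + n) := by
      apply Real.log_le_log (by exact_mod_cast hn)
      linarith
    have h3 : Real.log 2 ≤ Real.log (1 + n) := by
      apply Real.log_le_log (by norm_num)
      have : (1 : ℝ) ≤ n := by exact_mod_cast hn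
      linarith
    have h4 : (1 : ℝ) ≤ Real.log (1 + n) / Real.log 2 := by
      rw [le_div_iff₀ hlog2]; linarith
    calc (harmonic n : ℝ) ≤ 1 + Real.log (1 + n) := by linarith
      _ ≤ Real.log (1 + n) / Real.log 2 + Real.log (1 + n) := by linarith
      _ = (1 + 1 / Real.log 2) * Real.log (1 + n) := by ring
  calc τ * ∑ j ∈ Finset.Icc 1 n,
        Real.exp (-lam * (((n : ℝ) + 1 - j) * τ)) / (((n : ℝ) + 1 - j) * τ)
      ≤ ∑ j ∈ Finset.Icc 1 n, (1 : ℝ) / ((n : ℝ) + 1 - j) := step1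
    _ = (harmonic n : ℝ) := sum_reflect_inv n
    _ ≤ (1 + 1 / Real.log 2) * Real.log (1 + n) := step2
end

section
/- Let Γ(t,x,y) = ∫_Ω G(t,x,x') δ̃_y(x') dx', where G satisfies the Gaussian bound |G(t,x,y)| ≤ C t^{-d/2} e^{-|x-y|²/(Ct)} and δ̃_y ≥ 0 is supported in a ball of radius h around y with ∫ δ̃_y = 1 and ‖δ̃_y‖_{L^∞} ≤ C h^{-d}. Then for all x, y and t > 0 with max(|x−y|, √t) ≥ 2h, |Γ(t,x,y)| ≤ C' t^{-d/2} e^{-|x-y|²/(C' t)}. -/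
open Real MeasureTheory

set_option maxHeartbeats 1000000

/-- Averaging a Gaussian-bounded kernel against a regularized delta function
at scale `h` preserves the Gaussian bound away from the scale `h`:
if `|G(t,x,y)| ≤ C t^{-d/2} e^{-|x-y|²/(Ct)}`, `δ̃_y ≥ 0` is supported in
`B(y,h)` with `∫ δ̃_y = 1` and `‖δ̃_y‖_∞ ≤ C h^{-d}`, then
`Γ(t,x,y) = ∫_Ω G(t,x,x') δ̃_y(x') dx'` satisfies
`|Γ(t,x,y)| ≤ C' t^{-d/2} e^{-|x-y|²/(C't)}` whenever `max(|x-y|,√t) ≥ 2h`. -/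
theorem stmt_15 (d : ℕ) (hd : 1 ≤ d)
    (Ω : Set (EuclideanSpace ℝ (Fin d))) (hΩm : MeasurableSet Ω)
    (h C : ℝ) (hh : 0 < h) (hC : 0 < C)
    (G : ℝ → EuclideanSpace ℝ (Fin d) → EuclideanSpace ℝ (Fin d) → ℝ)
    (hG : ∀ t : ℝ, 0 < t → ∀ x y, |G t x y| ≤
      C * t ^ (-(d : ℝ) / 2) * Real.exp (-‖x - y‖ ^ 2 / (C * t)))
    (δreg : EuclideanSpace ℝ (Fin d) → EuclideanSpace ℝ (Fin d) → ℝ)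
    (hmeas : ∀ y, Measurable (δreg y))
    (hsupp : ∀ y, Function.support (δreg y) ⊆ Metric.ball y h)
    (hpos : ∀ y x, 0 ≤ δreg y x)
    (hint : ∀ y, ∫ x' in Ω, δreg y x' = 1)
    (hbd : ∀ y x, δreg y x ≤ C * h ^ (-(d : ℝ))) :
    ∃ C' : ℝ, 0 < C' ∧ ∀ t : ℝ, 0 < t → ∀ x y,
      2 * h ≤ max ‖x - y‖ (Real.sqrt t) →
      |∫ x' in Ω, G t x x' * δreg y x'| ≤
        C' * t ^ (-(d : ℝ) / 2) * Real.exp (-‖x - y‖ ^ 2 / (C' * t)) := by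
  have he : (1:ℝ) ≤ Real.exp 1 := by
    have := Real.add_one_le_exp 1; linarith
  set C' : ℝ := 4 * C + C * Real.exp 1 + 1 with hC'def
  have hC'1 : (1:ℝ) ≤ C' := by nlinarith
  have hC'pos : (0:ℝ) < C' := by linarith
  have hC'4 : 4 * C ≤ C' := by nlinarith
  refine ⟨C', hC'pos, ?_⟩
  intro t ht x y hmax
  set r := ‖x - y‖ with hr
  have hr0 : 0 ≤ r := norm_nonneg _
  have htp : (0:ℝ) < t ^ (-(d:ℝ)/2) := Real.rpow_pos_of_pos ht _
  set B : ℝ := C' * t ^ (-(d:ℝ)/2) * Real.exp (-r^2/(C'*t)) with hBdef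
  have hB0 : 0 ≤ B := by positivity
  -- pointwise bound on |G| on the ball
  have keyG : ∀ x', x' ∈ Metric.ball y h → |G t x x'| ≤ B := by
    intro x' hx'
    have hdist : ‖x' - y‖ < h := by
      simpa [dist_eq_norm] using hx'
    have hGb := hG t ht x x'
    rcases le_or_gt (2 * h) r with hcase | hcase
    · -- far case: ‖x - x'‖ ≥ r/2
      have htri : r ≤ ‖x - x'‖ + ‖x' - y‖ := by
        have := dist_triangle x x' y
        simpa [dist_eq_norm, hr] using this
      have hge : r / 2 ≤ ‖x - x'‖ := by linarith
      have hsq : r ^ 2 / 4 ≤ ‖x - x'‖ ^ 2 := by nlinarith [norm_nonneg (x - x')]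
      have hexp : Real.exp (-‖x - x'‖^2/(C*t)) ≤ Real.exp (-r^2/(C'*t)) := by
        apply Real.exp_le_exp.mpr
        rw [neg_div, neg_div, neg_le_neg_iff, div_le_div_iff₀ (by positivity) (by positivity)]
        nlinarith [mul_le_mul_of_nonneg_right hsq (mul_pos hC ht).le,
          mul_le_mul_of_nonneg_right hC'4 (mul_nonneg (sq_nonneg ‖x - x'‖) ht.le)]
      calc |G t x x'| ≤ C * t ^ (-(d:ℝ)/2) * Real.exp (-‖x - x'‖^2/(C*t)) := hGb
        _ ≤ C' * t ^ (-(d:ℝ)/2) * Real.exp (-r^2/(C'*t)) := by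
            apply mul_le_mul
            · apply mul_le_mul_of_nonneg_right (by nlinarith) htp.le
            · exact hexp
            · positivity
            · positivity
    · -- near case: √t ≥ 2h, so r² ≤ t
      have hst : 2 * h ≤ Real.sqrt t := by
        rcases le_max_iff.mp hmax with h1 | h1
        · linarith
        · exact h1
      have hrt : r ^ 2 ≤ t := by
        nlinarith [Real.sq_sqrt ht.le, Real.sqrt_nonneg t]
      have hexp1 : Real.exp (-‖x - x'‖^2/(C*t)) ≤ 1 := by
        apply Real.exp_le_one_iff.mpr
        rw [neg_div]
        simp only [Left.neg_nonpos_iff]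
        positivity
      have hmul : Real.exp 1 * Real.exp (-1) = 1 := by
        rw [← Real.exp_add]; norm_num
      have hexp2 : Real.exp (-1) ≤ Real.exp (-r^2/(C'*t)) := by
        apply Real.exp_le_exp.mpr
        rw [neg_div, neg_le_neg_iff, div_le_one (by positivity)]
        nlinarith
      have hCC : C ≤ C' * Real.exp (-r^2/(C'*t)) := by
        have h1 : C * Real.exp 1 * Real.exp (-1) ≤ C' * Real.exp (-1) := by
          apply mul_le_mul_of_nonneg_right _ (Real.exp_pos _).le
          nlinarith
        have h2 : C' * Real.exp (-1) ≤ C' * Real.exp (-r^2/(C'*t)) :=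
          mul_le_mul_of_nonneg_left hexp2 hC'pos.le
        nlinarith
      calc |G t x x'| ≤ C * t ^ (-(d:ℝ)/2) * Real.exp (-‖x - x'‖^2/(C*t)) := hGb
        _ ≤ C * t ^ (-(d:ℝ)/2) * 1 := by
            apply mul_le_mul_of_nonneg_left hexp1 (by positivity)
        _ = t ^ (-(d:ℝ)/2) * C := by ring
        _ ≤ t ^ (-(d:ℝ)/2) * (C' * Real.exp (-r^2/(C'*t))) :=
            mul_le_mul_of_nonneg_left hCC htp.le
        _ = B := by rw [hBdef]; ring
  -- pointwise bound on the integrand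
  have key : ∀ x', |G t x x' * δreg y x'| ≤ B * δreg y x' := by
    intro x'
    rcases eq_or_ne (δreg y x') 0 with h0 | h0
    · simp [h0]
    · have hx' : x' ∈ Metric.ball y h := hsupp y (Function.mem_support.mpr h0)
      rw [abs_mul, abs_of_nonneg (hpos y x')]
      exact mul_le_mul_of_nonneg_right (keyG x' hx') (hpos y x')
  -- integrability of δreg y on Ω
  have hδint : Integrable (δreg y) (volume.restrict Ω) := by
    have hglob : Integrable (δreg y) (volume : Measure (EuclideanSpace ℝ (Fin d))) := by
      refine Integrable.mono'
        (g := (Metric.ball y h).indicator (fun _ => C * h ^ (-(d:ℝ)))) ?_ ?_ ?_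
      · exact (integrable_indicator_iff Metric.isOpen_ball.measurableSet).mpr
          (integrableOn_const measure_ball_lt_top.ne)
      · exact (hmeas y).aestronglyMeasurable
      · refine Filter.Eventually.of_forall fun x' => ?_
        rw [Real.norm_eq_abs, abs_of_nonneg (hpos y x')]
        by_cases hx : x' ∈ Metric.ball y h
        · rw [Set.indicator_of_mem hx]; exact hbd y x'
        · rw [Set.indicator_of_notMem hx]
          have h0 : δreg y x' = 0 :=
            Function.notMem_support.mp (fun hs => hx (hsupp y hs))
          exact le_of_eq h0
    exact hglob.restrict
  calc |∫ x' in Ω, G t x x' * δreg y x'| ≤ ∫ x' in Ω, |G t x x' * δreg y x'| := by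
        simpa only [Real.norm_eq_abs] using
          norm_integral_le_integral_norm (μ := volume.restrict Ω)
            (f := fun x' => G t x x' * δreg y x')
    _ ≤ ∫ x' in Ω, B * δreg y x' := by
        apply integral_mono_of_nonneg
        · exact Filter.Eventually.of_forall fun x' => abs_nonneg _
        · exact hδint.const_mul B
        · exact Filter.Eventually.of_forall key
    _ = B * ∫ x' in Ω, δreg y x' := MeasureTheory.integral_const_mul B _
    _ = B := by rw [hint y, mul_one]
end
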